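/- For all θ, θ' ∈ ℝ, writing α := θ' − θ, the following two identities hold: det(M(θ') − M(θ)) = 4/9 − (2/3)cos(α) + (2/9)cos³(α), and |M(θ') − M(θ)|² = 10/9 − (2/3)cos(α) − (4/9)cos³(α), where |·| denotes the Frobenius norm. -/

import Mathlib

open MeasureTheory Complex Filter Metric Set
open scoped Topology ENNReal NNReal

noncomputable section

def dotC (a b : ℂ) : ℝ := a.re * b.re + a.im * b.im

def pc1 (f : ℂ → ℝ) (x : ℂ) : ℝ := fderiv ℝ f x 1
def pc2 (f : ℂ → ℝ) (x : ℂ) : ℝ := fderiv ℝ f x Complex.I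

def gradC (f : ℂ → ℝ) (x : ℂ) : ℂ := ⟨pc1 f x, pc2 f x⟩

def SigmaA (u : ℂ → ℝ) (x : ℂ) : ℂ :=
  ⟨pc1 u x * (1 - (pc2 u x) ^ 2 - (pc1 u x) ^ 2 / 3),
   -(pc2 u x) * (1 - (pc1 u x) ^ 2 - (pc2 u x) ^ 2 / 3)⟩

def SigmaB (u : ℂ → ℝ) (x : ℂ) : ℂ :=
  ⟨pc2 u x * (1 - 2 * (pc2 u x) ^ 2 / 3),
   pc1 u x * (1 - 2 * (pc1 u x) ^ 2 / 3)⟩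

def IsTestOn (Ω : Set ℂ) (ζ : ℂ → ℝ) : Prop :=
  ContDiff ℝ (⊤ : ℕ∞) ζ ∧ HasCompactSupport ζ ∧ tsupport ζ ⊆ Ω

def MemE (Ω : Set ℂ) (u : ℂ → ℝ) : Prop :=
  (∃ L : ℝ≥0, LipschitzOnWith L u Ω) ∧
  (∀ᵐ x ∂(volume.restrict Ω), DifferentiableAt ℝ u x ∧ ‖gradC u x‖ = 1) ∧
  (∀ ζ : ℂ → ℝ, IsTestOn Ω ζ → ∫ x in Ω, dotC (SigmaA u x) (gradC ζ x) = 0) ∧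
  (∀ ζ : ℂ → ℝ, IsTestOn Ω ζ → ∫ x in Ω, dotC (SigmaB u x) (gradC ζ x) = 0)

def IsBSCDomain (Ω : Set ℂ) : Prop :=
  IsOpen Ω ∧ IsConnected Ω ∧ Bornology.IsBounded Ω ∧ SimplyConnectedSpace Ω

def Cpt (Ω' Ω : Set ℂ) : Prop := IsCompact (closure Ω') ∧ closure Ω' ⊆ Ω

def wz (v : ℂ → ℂ) (z : ℂ) : ℂ :=
  (2⁻¹ : ℂ) * (fderiv ℝ v z 1 - Complex.I * fderiv ℝ v z Complex.I)
def wzbar (v : ℂ → ℂ) (z : ℂ) : ℂ :=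
  (2⁻¹ : ℂ) * (fderiv ℝ v z 1 + Complex.I * fderiv ℝ v z Complex.I)

def BeltramiAE (Ω : Set ℂ) (v : ℂ → ℂ) : Prop :=
  ∀ᵐ z ∂(volume.restrict Ω), DifferentiableAt ℝ v z ∧
    wzbar v z = (4/3 : ℂ) * (wz v z) ^ 3 ∧ ‖wz v z‖ = 1/2

def mollify (ρ : ℂ → ℝ) (ε : ℝ) (x : ℂ) : ℝ := (ε ^ 2)⁻¹ * ρ (ε⁻¹ • x)

def smoothR (ρ : ℂ → ℝ) (ε : ℝ) (u : ℂ → ℝ) : ℂ → ℝ :=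
  MeasureTheory.convolution (mollify ρ ε) u (ContinuousLinearMap.lsmul ℝ ℝ) volume

def smoothC (ρ : ℂ → ℝ) (ε : ℝ) (w : ℂ → ℂ) : ℂ → ℂ :=
  MeasureTheory.convolution (mollify ρ ε) w (ContinuousLinearMap.lsmul ℝ ℝ) volume

def IsMollifier (ρ : ℂ → ℝ) : Prop :=
  ContDiff ℝ (⊤ : ℕ∞) ρ ∧ (∀ x, 0 ≤ ρ x) ∧ tsupport ρ ⊆ Metric.closedBall 0 1 ∧ (∫ x, ρ x) = 1

def dir : Fin 2 → ℂ := ![1, Complex.I]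
def pd (i : Fin 2) (f : ℂ → ℝ) (x : ℂ) : ℝ := fderiv ℝ f x (dir i)
def comp2 (i : Fin 2) (z : ℂ) : ℝ := ![z.re, z.im] i

def wfun (u : ℂ → ℝ) (x : ℂ) : ℂ := Complex.I * gradC u x

def sep (s t : Set ℂ) : ℝ := ⨅ x ∈ s, Metric.infDist x t


/-- The matrix `M(θ)`. -/
def Mmat (θ : ℝ) : Matrix (Fin 2) (Fin 2) ℝ :=
  !![(2/3) * Real.sin θ ^ 3, (2/3) * Real.cos θ ^ 3;
     -(Real.cos θ * (1 - (2/3) * Real.cos θ ^ 2)), Real.sin θ * (1 - (2/3) * Real.sin θ ^ 2)]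

/-- The set `K` of matrices `M(θ)`, `θ ∈ [0, 2π)`. -/
def Kset : Set (Matrix (Fin 2) (Fin 2) ℝ) :=
  {A | ∃ θ ∈ Set.Ico (0:ℝ) (2 * Real.pi), A = Mmat θ}

/-- The Frobenius norm of a `2 × 2` real matrix. -/
def frob (A : Matrix (Fin 2) (Fin 2) ℝ) : ℝ := Real.sqrt (∑ i, ∑ j, (A i j) ^ 2)

/-- the determinant and Frobenius norm identities for differences of
matrices in the parametrized family `M(θ)`. -/
theorem stmt7 (θ θ' : ℝ) :
    (Mmat θ' - Mmat θ).det
        = 4/9 - (2/3) * Real.cos (θ' - θ) + (2/9) * Real.cos (θ' - θ) ^ 3 ∧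
    frob (Mmat θ' - Mmat θ) ^ 2
        = 10/9 - (2/3) * Real.cos (θ' - θ) - (4/9) * Real.cos (θ' - θ) ^ 3 := by

  have h1 : Real.sin θ ^ 2 + Real.cos θ ^ 2 = 1 := Real.sin_sq_add_cos_sq θ
  have h2 : Real.sin θ' ^ 2 + Real.cos θ' ^ 2 = 1 := Real.sin_sq_add_cos_sq θ'
  set s := Real.sin θ; set c := Real.cos θ; set S := Real.sin θ'; set C := Real.cos θ'
  have hca : Real.cos (θ' - θ) = C * c + S * s := Real.cos_sub θ' θ
  constructor
  · rw [hca]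
    simp only [Mmat, Matrix.det_fin_two, Matrix.sub_apply, Matrix.cons_val', Matrix.cons_val_zero,
      Matrix.cons_val_one, Matrix.head_cons, Matrix.empty_val', Matrix.cons_val_fin_one,
      Matrix.head_fin_const, Matrix.of_apply]
    linear_combination ((2/9) + (-2/3)*c*S^2*C + (2/9)*c^2 + (-4/9)*c^4 + (-2/3)*s*S + (2/3)*s*S^3 + (2/9)*s^2 + (4/9)*s^2*c^2 + (-4/9)*s^4) * h1 + ((2/9) + (2/9)*C^2 + (-4/9)*C^4 + (2/9)*S^2 + (4/9)*S^2*C^2 + (-4/9)*S^4 + (-2/3)*c*C + (2/3)*c^3*C + (-2/3)*s*c^2*S) * h2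
  · rw [hca]
    have hnn : (0:ℝ) ≤ ∑ i, ∑ j, ((Mmat θ' - Mmat θ) i j) ^ 2 :=
      Finset.sum_nonneg fun i _ => Finset.sum_nonneg fun j _ => sq_nonneg _
    rw [frob, Real.sq_sqrt hnn]
    simp only [Mmat, Fin.sum_univ_two, Matrix.sub_apply, Matrix.cons_val', Matrix.cons_val_zero,
      Matrix.cons_val_one, Matrix.head_cons, Matrix.empty_val', Matrix.cons_val_fin_one,
      Matrix.head_fin_const, Matrix.of_apply]
    linear_combination ((5/9) + (4/3)*c*S^2*C + (-4/9)*c^2 + (8/9)*c^4 + (4/3)*s*S + (-4/3)*s*S^3 + (-4/9)*s^2 + (-8/9)*s^2*c^2 + (8/9)*s^4) * h1 + ((5/9) + (-4/9)*C^2 + (8/9)*C^4 + (-4/9)*S^2 + (-8/9)*S^2*C^2 + (8/9)*S^4 + (4/3)*c*C + (-4/3)*c^3*C + (4/3)*s*c^2*S) * h2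


end
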